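/- Let 0 ≤ m ≤ k ≤ n. Then there exists a collection of 2^{(k−m)²} · [n−k choose k−m]₂ · [k choose m]₂ mutually orthogonal permutations of Gr₂(n,k), each of which has the m-intersection property. -/

import Mathlib

/-- The Gaussian binomial coefficient `[n choose k]₂`, as a natural number:
`∏_{i=0}^{k-1}(2^{n-i}-1) / ∏_{i=0}^{k-1}(2^{k-i}-1)` (the division is exact). -/
def gbinomN (n k : ℕ) : ℕ :=
  (∏ i ∈ Finset.range k, (2 ^ (n - i) - 1)) / (∏ i ∈ Finset.range k, (2 ^ (k - i) - 1))


open Finset in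
/-- A relation on a finite type with all out-degrees and in-degrees equal to `N`
decomposes into `N` pointwise-distinct permutations. -/
theorem exists_perms_of_regular {S : Type*} [Fintype S] [DecidableEq S]
    (N : ℕ) (R : S → S → Prop) [DecidableRel R]
    (hout : ∀ a : S, (univ.filter (fun b => R a b)).card = N)
    (hin : ∀ b : S, (univ.filter (fun a => R a b)).card = N) :
    ∃ π : Fin N → Equiv.Perm S,
      (∀ i j, i ≠ j → ∀ a, π i a ≠ π j a) ∧ (∀ i a, R a (π i a)) := by
  induction N generalizing R with
  | zero =>
    exact ⟨fun i => 1, fun i j h => absurd (Subsingleton.elim i j) h, fun i => i.elim0⟩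
  | succ N ih =>
    -- find one perfect matching via Hall
    have hall : ∀ s : Finset S, s.card ≤ (s.biUnion (fun a => univ.filter (fun b => R a b))).card := by
      intro s
      set t := fun a => univ.filter (fun b => R a b)
      set E := (s ×ˢ (s.biUnion t)).filter (fun p => R p.1 p.2) with hE
      have e1 : E.card = ∑ a ∈ s, (t a).card := by
        rw [Finset.card_eq_sum_card_fiberwise (f := Prod.fst) (t := s)
          (fun p hp => (Finset.mem_product.mp (Finset.mem_filter.mp hp).1).1)]
        refine Finset.sum_congr rfl fun a ha => ?_
        have : E.filter (fun p => p.1 = a) = (t a).image (fun b => (a, b)) := by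
          ext p
          simp only [hE, Finset.mem_filter, Finset.mem_product, Finset.mem_image, t,
            Finset.mem_univ, true_and, Finset.mem_biUnion]
          constructor
          · rintro ⟨⟨⟨h1, h2⟩, h3⟩, h4⟩
            exact ⟨p.2, by rw [← h4]; exact h3, by rw [← h4]⟩
          · rintro ⟨b, hb, rfl⟩
            exact ⟨⟨⟨ha, ⟨a, ha, by simpa [t] using hb⟩⟩, hb⟩, rfl⟩
        rw [this, Finset.card_image_of_injective _ (fun x y h => by simpa using h)]
      have e2 : E.card ≤ ∑ _b ∈ s.biUnion t, (N+1) := by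
        rw [Finset.card_eq_sum_card_fiberwise (f := Prod.snd) (t := s.biUnion t)
          (fun p hp => (Finset.mem_product.mp (Finset.mem_filter.mp hp).1).2)]
        refine Finset.sum_le_sum fun b hb => ?_
        calc (E.filter (fun p => p.2 = b)).card
            ≤ (univ.filter (fun a => R a b)).card := by
              apply Finset.card_le_card_of_injOn Prod.fst
              · intro p hp
                simp only [hE, Finset.mem_coe, Finset.mem_filter] at hp ⊢
                simp only [Finset.mem_univ, true_and]
                rw [← hp.2]; exact hp.1.2
              · intro p hp q hq hpq
                simp only [hE, Finset.mem_coe, Finset.mem_filter] at hp hq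
                exact Prod.ext hpq (hp.2.trans hq.2.symm)
          _ = N + 1 := hin b
      have key : (N+1) * s.card ≤ (N+1) * (s.biUnion t).card := by
        calc (N+1) * s.card = ∑ a ∈ s, (t a).card := by
              rw [Finset.sum_congr rfl (fun a _ => hout a), Finset.sum_const, smul_eq_mul, mul_comm]
          _ = E.card := e1.symm
          _ ≤ ∑ _b ∈ s.biUnion t, (N+1) := e2
          _ = (N+1) * (s.biUnion t).card := by rw [Finset.sum_const, smul_eq_mul, mul_comm]
      exact Nat.le_of_mul_le_mul_left key (Nat.succ_pos N)
    obtain ⟨f, hfinj, hf⟩ := (Finset.all_card_le_biUnion_card_iff_exists_injective _).mp hall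
    have hbij : Function.Bijective f := Finite.injective_iff_bijective.mp hfinj
    let σ : Equiv.Perm S := Equiv.ofBijective f hbij
    have hσ : ∀ a, R a (σ a) := by intro a; exact (by simpa using hf a : R a (f a))
    -- reduced relation
    set R' : S → S → Prop := fun a b => R a b ∧ b ≠ σ a with hR'
    have hout' : ∀ a : S, (univ.filter (fun b => R' a b)).card = N := by
      intro a
      have : univ.filter (fun b => R' a b) = (univ.filter (fun b => R a b)).erase (σ a) := by
        ext b; simp [hR', and_comm]
      rw [this, Finset.card_erase_of_mem (by simp [hσ a]), hout a]
      omega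
    have hin' : ∀ b : S, (univ.filter (fun a => R' a b)).card = N := by
      intro b
      have hmem : σ.symm b ∈ univ.filter (fun a => R a b) := by
        have h := hσ (σ.symm b)
        rw [Equiv.apply_symm_apply] at h
        simpa using h
      have : univ.filter (fun a => R' a b) = (univ.filter (fun a => R a b)).erase (σ.symm b) := by
        ext a
        simp only [mem_filter, mem_erase, mem_univ, true_and, hR']
        constructor
        · rintro ⟨h1, h2⟩
          exact ⟨fun hc => h2 (by rw [hc, Equiv.apply_symm_apply]), h1⟩
        · rintro ⟨h1, h2⟩
          exact ⟨h2, fun hc => h1 (by rw [hc]; exact (Equiv.symm_apply_apply σ a).symm)⟩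
      rw [this, Finset.card_erase_of_mem hmem, hin b]
      omega
    obtain ⟨π', hπ'orth, hπ'R⟩ := ih R' hout' hin'
    refine ⟨Fin.cons σ π', ?_, ?_⟩
    · intro i j hij a
      induction i using Fin.cases with
      | zero =>
        induction j using Fin.cases with
        | zero => exact absurd rfl hij
        | succ j => simp only [Fin.cons_zero, Fin.cons_succ]
                    exact fun h => (hπ'R j a).2 h.symm
      | succ i =>
        induction j using Fin.cases with
        | zero => simp only [Fin.cons_zero, Fin.cons_succ]
                  exact fun h => (hπ'R i a).2 h
        | succ j =>
          simp only [Fin.cons_succ]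
          exact hπ'orth i j (fun h => hij (by rw [h])) a
    · intro i a
      induction i using Fin.cases with
      | zero => simpa using hσ a
      | succ i => simpa using (hπ'R i a).1



open Module Finset

section
variable {K V : Type*} [Field K] [Fintype K] [AddCommGroup V] [Module K V]
  [FiniteDimensional K V]

theorem card_grassmannian_mul (j : ℕ) (hj : j ≤ finrank K V) :
    Nat.card {W : Submodule K V // finrank K W = j} *
      ∏ i ∈ range j, (Fintype.card K ^ j - Fintype.card K ^ i) =
      ∏ i ∈ range j, (Fintype.card K ^ finrank K V - Fintype.card K ^ i) := by
  have : Finite V := Module.finite_of_finite K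
  classical
  have key : Nat.card {s : Fin j → V // LinearIndependent K s} =
      ∏ i ∈ range j, (Fintype.card K ^ finrank K V - Fintype.card K ^ i) := by
    rw [card_linearIndependent hj,
      Fin.prod_univ_eq_prod_range (fun i => Fintype.card K ^ finrank K V - Fintype.card K ^ i) j]
  -- fiber map to Grassmannian
  set f : {s : Fin j → V // LinearIndependent K s} → {W : Submodule K V // finrank K W = j} :=
    fun s => ⟨Submodule.span K (Set.range (s : Fin j → V)), by
      rw [finrank_span_eq_card s.2, Fintype.card_fin]⟩ with hf
  have fibEquiv : ∀ W : {W : Submodule K V // finrank K W = j},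
      {s // f s = W} ≃ {t : Fin j → ↥W.1 // LinearIndependent K t} := by
    intro W
    refine ⟨fun s => ⟨fun i => ⟨s.1.1 i, ?_⟩, ?_⟩, fun t => ⟨⟨fun i => (t.1 i : V), ?_⟩, ?_⟩, ?_, ?_⟩
    · have : Submodule.span K (Set.range (s.1 : Fin j → V)) = W.1 := congrArg Subtype.val s.2
      exact this ▸ Submodule.subset_span (Set.mem_range_self i)
    · have := s.1.2
      exact (LinearMap.linearIndependent_iff W.1.subtype (Submodule.ker_subtype _)).mp
        (by exact this)
    · exact (t.2.map' W.1.subtype (Submodule.ker_subtype _))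
    · apply Subtype.ext
      have hspan : Submodule.span K (Set.range t.1) = ⊤ := by
        apply Submodule.eq_top_of_finrank_eq
        rw [finrank_span_eq_card t.2, Fintype.card_fin, W.2]
      show Submodule.span K (Set.range (fun i => (W.1.subtype (t.1 i)))) = W.1
      rw [show (fun i => W.1.subtype (t.1 i)) = W.1.subtype ∘ t.1 from rfl, Set.range_comp,
        ← Submodule.map_span, hspan, Submodule.map_subtype_top]
    · intro s; apply Subtype.ext; apply Subtype.ext; rfl
    · intro t; apply Subtype.ext; funext i; apply Subtype.ext; rfl
  have : Finite (Submodule K V) := Finite.of_injective _ SetLike.coe_injective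
  have fintypeGr : Fintype {W : Submodule K V // finrank K W = j} := Fintype.ofFinite _
  have sigma : Nat.card {s : Fin j → V // LinearIndependent K s} =
      ∑ W : {W : Submodule K V // finrank K W = j},
        Nat.card {t : Fin j → ↥W.1 // LinearIndependent K t} := by
    haveI : ∀ W : {W : Submodule K V // finrank K W = j}, Fintype {s // f s = W} :=
      fun W => Fintype.ofFinite _
    haveI : Fintype {s : Fin j → V // LinearIndependent K s} := Fintype.ofFinite _
    rw [Nat.card_congr (Equiv.sigmaFiberEquiv f).symm, Nat.card_eq_fintype_card,
      Fintype.card_sigma]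
    exact Finset.sum_congr rfl fun W _ =>
      (Nat.card_eq_fintype_card.symm.trans (Nat.card_congr (fibEquiv W)))
  have cardW : ∀ W : {W : Submodule K V // finrank K W = j},
      Nat.card {t : Fin j → ↥W.1 // LinearIndependent K t} =
      ∏ i ∈ range j, (Fintype.card K ^ j - Fintype.card K ^ i) := by
    intro W
    have : FiniteDimensional K ↥W.1 := inferInstance
    rw [card_linearIndependent (by rw [W.2]), W.2,
      Fin.prod_univ_eq_prod_range (fun i => Fintype.card K ^ j - Fintype.card K ^ i) j]
  rw [← key, sigma, Finset.sum_congr rfl fun W _ => cardW W, Finset.sum_const, smul_eq_mul,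
    Nat.card_eq_fintype_card, Finset.card_univ]

theorem card_grassmannian_zmod {V : Type*} [AddCommGroup V] [Module (ZMod 2) V]
    [FiniteDimensional (ZMod 2) V] (j : ℕ) :
    Nat.card {W : Submodule (ZMod 2) V // finrank (ZMod 2) W = j} =
      gbinomN (finrank (ZMod 2) V) j := by
  have : Finite V := Module.finite_of_finite (ZMod 2)
  set d := finrank (ZMod 2) V with hd
  by_cases hj : j ≤ d
  · have h := card_grassmannian_mul (K := ZMod 2) (V := V) j hj
    rw [ZMod.card 2] at h
    have hA : ∏ i ∈ range j, (2 ^ j - 2 ^ i) = 2 ^ (∑ i ∈ range j, i) * ∏ i ∈ range j, (2 ^ (j - i) - 1) := by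
      rw [← Finset.prod_pow_eq_pow_sum, ← Finset.prod_mul_distrib]
      refine Finset.prod_congr rfl fun i hi => ?_
      have hij : i ≤ j := le_of_lt (Finset.mem_range.mp hi)
      rw [Nat.mul_sub, mul_one, ← pow_add, Nat.add_sub_cancel' hij]
    have hB : ∏ i ∈ range j, (2 ^ d - 2 ^ i) =
        2 ^ (∑ i ∈ range j, i) * ∏ i ∈ range j, (2 ^ (d - i) - 1) := by
      rw [← Finset.prod_pow_eq_pow_sum, ← Finset.prod_mul_distrib]
      refine Finset.prod_congr rfl fun i hi => ?_
      have hij : i ≤ d := le_trans (le_of_lt (Finset.mem_range.mp hi)) hj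
      rw [Nat.mul_sub, mul_one, ← pow_add, Nat.add_sub_cancel' hij]
    rw [← hd, hA, hB] at h
    have hA' : 0 < ∏ i ∈ range j, (2 ^ (j - i) - 1) := by
      apply Finset.prod_pos
      intro i hi
      have : 1 ≤ j - i := by have := Finset.mem_range.mp hi; omega
      have : (2:ℕ) ^ 1 ≤ 2 ^ (j - i) := Nat.pow_le_pow_right (by norm_num) this
      omega
    have hcancel : Nat.card { W : Submodule (ZMod 2) V // finrank (ZMod 2) ↥W = j } *
        ∏ i ∈ range j, (2 ^ (j - i) - 1) = ∏ i ∈ range j, (2 ^ (d - i) - 1) := by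
      have h2 : (2:ℕ) ^ (∑ i ∈ range j, i) > 0 := pow_pos (by norm_num) _
      apply Nat.eq_of_mul_eq_mul_left h2
      calc 2 ^ (∑ i ∈ range j, i) * (Nat.card { W : Submodule (ZMod 2) V // finrank (ZMod 2) ↥W = j } *
              ∏ i ∈ range j, (2 ^ (j - i) - 1))
          = Nat.card { W : Submodule (ZMod 2) V // finrank (ZMod 2) ↥W = j } *
              (2 ^ (∑ i ∈ range j, i) * ∏ i ∈ range j, (2 ^ (j - i) - 1)) := by ring
        _ = 2 ^ (∑ i ∈ range j, i) * ∏ i ∈ range j, (2 ^ (d - i) - 1) := h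
    rw [gbinomN]
    exact (Nat.div_eq_of_eq_mul_left hA' hcancel.symm).symm
  · have hempty : IsEmpty { W : Submodule (ZMod 2) V // finrank (ZMod 2) W = j } := by
      refine ⟨fun W => hj ?_⟩
      rw [← W.2, hd]
      exact Submodule.finrank_le W.1
    rw [Nat.card_of_isEmpty, gbinomN]
    have : ∏ i ∈ range j, (2 ^ (d - i) - 1) = 0 := by
      apply Finset.prod_eq_zero (Finset.mem_range.mpr (by omega : d < j))
      simp
    rw [this, Nat.zero_div]
end

section
variable {K V : Type*} [Field K] [Fintype K] [AddCommGroup V] [Module K V]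
  [FiniteDimensional K V]

theorem card_trivial_inter (U : Submodule K V) (j : ℕ) :
    Nat.card {T : Submodule K V // finrank K T = j ∧ T ⊓ U = ⊥} =
      Nat.card {T' : Submodule K (V ⧸ U) // finrank K T' = j} *
        Fintype.card K ^ (j * finrank K U) := by
  classical
  have : Finite V := Module.finite_of_finite K
  have : Finite (Submodule K V) := Finite.of_injective _ SetLike.coe_injective
  have : Finite (V ⧸ U) := Quotient.finite _
  have : Finite (Submodule K (V ⧸ U)) := Finite.of_injective _ SetLike.coe_injective
  set π := U.mkQ with hπ
  obtain ⟨σ, hσ⟩ := π.exists_rightInverse_of_surjective (by rw [Submodule.range_mkQ])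
  have hσ' : ∀ x : V ⧸ U, π (σ x) = x := fun x => congrArg (· x) hσ
  have hπU : ∀ u ∈ U, π u = 0 := fun u hu => by
    simpa [π, Submodule.Quotient.mk_eq_zero] using hu
  -- the fiber map
  have hg : ∀ T : {T : Submodule K V // finrank K T = j ∧ T ⊓ U = ⊥},
      finrank K (T.1.map π) = j := by
    rintro ⟨T, hT1, hT2⟩
    have hker : LinearMap.ker (π.comp T.subtype) = ⊥ := by
      rw [LinearMap.ker_eq_bot']
      intro x hx
      have hxU : (x : V) ∈ U := by
        simpa [π, Submodule.Quotient.mk_eq_zero] using hx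
      have : (x : V) ∈ T ⊓ U := ⟨x.2, hxU⟩
      rw [hT2] at this
      exact Subtype.ext (by simpa using this)
    have hrange : LinearMap.range (π.comp T.subtype) = T.map π := by
      rw [LinearMap.range_comp, Submodule.range_subtype]
    have := LinearMap.finrank_range_add_finrank_ker (π.comp T.subtype)
    rw [hker, finrank_bot, add_zero, hrange] at this
    rw [this, hT1]
  set g : {T : Submodule K V // finrank K T = j ∧ T ⊓ U = ⊥} →
      {T' : Submodule K (V ⧸ U) // finrank K T' = j} :=
    fun T => ⟨T.1.map π, hg T⟩ with hgdef
  -- fibers are in bijection with Hom spaces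
  have fibEquiv : ∀ T' : {T' : Submodule K (V ⧸ U) // finrank K T' = j},
      {T // g T = T'} ≃ (↥T'.1 →ₗ[K] ↥U) := by
    intro T'
    -- the map from Hom to the fiber
    set mk : (↥T'.1 →ₗ[K] ↥U) → Submodule K V :=
      fun φ => LinearMap.range (σ.comp T'.1.subtype + U.subtype.comp φ) with hmk
    have hval : ∀ (φ : ↥T'.1 →ₗ[K] ↥U) (x : ↥T'.1),
        (σ.comp T'.1.subtype + U.subtype.comp φ) x = σ x + (φ x : V) := fun φ x => rfl
    have hπf : ∀ (φ : ↥T'.1 →ₗ[K] ↥U) (x : ↥T'.1), π ((σ.comp T'.1.subtype + U.subtype.comp φ) x) = (x : V ⧸ U) := by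
      intro φ x
      rw [hval, map_add, hσ', hπU _ (φ x).2, add_zero]
    have hinj : ∀ (φ : ↥T'.1 →ₗ[K] ↥U), Function.Injective (σ.comp T'.1.subtype + U.subtype.comp φ) := by
      intro φ x y hxy
      have := congrArg π hxy
      rw [hπf, hπf] at this
      exact Subtype.ext this
    have hmem : ∀ (φ : ↥T'.1 →ₗ[K] ↥U), (finrank K (mk φ) = j ∧ mk φ ⊓ U = ⊥) ∧ (mk φ).map π = T'.1 := by
      intro φ
      refine ⟨⟨?_, ?_⟩, ?_⟩
      · rw [hmk]
        rw [LinearMap.finrank_range_of_inj (hinj φ)]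
        exact T'.2
      · rw [eq_bot_iff]
        rintro v ⟨⟨x, rfl⟩, hvU⟩
        have h0 : (x : V ⧸ U) = 0 := by
          rw [← hπf φ x]
          exact hπU _ hvU
        have : x = 0 := Subtype.ext h0
        simp [this]
      · rw [hmk, ← LinearMap.range_comp]
        have : π.comp (σ.comp T'.1.subtype + U.subtype.comp φ) = T'.1.subtype := by
          ext x
          exact hπf φ x
        rw [this, Submodule.range_subtype]
    have hmkinj : Function.Injective mk := by
      intro φ ψ h
      ext x
      have h1 : (σ.comp T'.1.subtype + U.subtype.comp φ) x ∈ mk ψ := by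
        rw [← h]; exact LinearMap.mem_range_self _ x
      obtain ⟨y, hy⟩ := h1
      have hxy : y = x := by
        have := congrArg π hy
        rw [hπf, hπf] at this
        exact Subtype.ext this
      rw [hxy] at hy
      rw [hval, hval] at hy
      have := add_left_cancel hy
      exact (congrArg Subtype.val (Subtype.ext this : ψ x = φ x)).symm
    refine (Equiv.ofBijective (fun φ => ⟨⟨mk φ, (hmem φ).1⟩, Subtype.ext (hmem φ).2⟩ :
      (↥T'.1 →ₗ[K] ↥U) → {T // g T = T'}) ⟨?_, ?_⟩).symm
    · intro φ ψ h
      exact hmkinj (congrArg (fun T => T.1.1) h)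
    · rintro ⟨⟨T, hT1, hT2⟩, hT3⟩
      have hT3' : T.map π = T'.1 := congrArg Subtype.val hT3
      -- construct the equivalence T ≃ₗ T'
      have heinj : Function.Injective (π.comp T.subtype) := by
        intro x y hxy
        have hmem : (x - y : V) ∈ T ⊓ U := by
          refine ⟨sub_mem x.2 y.2, ?_⟩
          have : π ((x : V) - y) = 0 := by
            rw [map_sub]; exact sub_eq_zero_of_eq hxy
          rwa [hπ, Submodule.mkQ_apply, Submodule.Quotient.mk_eq_zero] at this
        rw [hT2] at hmem
        exact Subtype.ext (by simpa [sub_eq_zero] using hmem)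
      set ee : ↥T →ₗ[K] ↥T'.1 := (π.comp T.subtype).codRestrict T'.1 (fun x => by
        rw [← hT3']
        exact ⟨x, x.2, rfl⟩) with hee
      have heebij : Function.Bijective ee := by
        constructor
        · intro x y hxy
          exact heinj (congrArg Subtype.val hxy)
        · rintro ⟨y, hy⟩
          rw [← hT3'] at hy
          obtain ⟨t, ht, hts⟩ := hy
          exact ⟨⟨t, ht⟩, Subtype.ext hts⟩
      set e' := LinearEquiv.ofBijective ee heebij with he'
      set ψ0 : ↥T'.1 →ₗ[K] V := T.subtype.comp (e'.symm : ↥T'.1 →ₗ[K] ↥T) with hψ0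
      have hψ0π : ∀ x : ↥T'.1, π (ψ0 x) = (x : V ⧸ U) := by
        intro x
        have : ee (e'.symm x) = x := e'.apply_symm_apply x
        exact congrArg Subtype.val this
      have hφmem : ∀ x : ↥T'.1, ψ0 x - σ.comp T'.1.subtype x ∈ U := by
        intro x
        have : π (ψ0 x - σ.comp T'.1.subtype x) = 0 := by
          rw [map_sub, hψ0π]
          show (x : V ⧸ U) - π (σ x) = 0
          rw [hσ', sub_self]
        rwa [hπ, Submodule.mkQ_apply, Submodule.Quotient.mk_eq_zero] at this
      set φ : ↥T'.1 →ₗ[K] ↥U := (ψ0 - σ.comp T'.1.subtype).codRestrict U hφmem with hφ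
      refine ⟨φ, ?_⟩
      apply Subtype.ext; apply Subtype.ext
      have hfun : σ.comp T'.1.subtype + U.subtype.comp φ = ψ0 := by
        ext x
        show σ x + (ψ0 x - σ x) = ψ0 x
        abel
      show LinearMap.range (σ.comp T'.1.subtype + U.subtype.comp φ) = T
      rw [hfun, hψ0, LinearMap.range_comp, LinearEquiv.range, Submodule.map_top,
        Submodule.range_subtype]
  -- assemble
  haveI : Fintype {T' : Submodule K (V ⧸ U) // finrank K T' = j} := Fintype.ofFinite _
  haveI : ∀ T' : {T' : Submodule K (V ⧸ U) // finrank K T' = j}, Fintype {T // g T = T'} :=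
    fun T' => Fintype.ofFinite _
  haveI : Fintype {T : Submodule K V // finrank K T = j ∧ T ⊓ U = ⊥} := Fintype.ofFinite _
  rw [Nat.card_congr (Equiv.sigmaFiberEquiv g).symm, Nat.card_eq_fintype_card,
    Fintype.card_sigma]
  have hcard : ∀ T' : {T' : Submodule K (V ⧸ U) // finrank K T' = j},
      Fintype.card {T // g T = T'} = Fintype.card K ^ (j * finrank K U) := by
    intro T'
    rw [← Nat.card_eq_fintype_card, Nat.card_congr (fibEquiv T')]
    haveI : Finite (↥T'.1 →ₗ[K] ↥U) := Finite.of_injective _ DFunLike.coe_injective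
    haveI : Fintype (↥T'.1 →ₗ[K] ↥U) := Fintype.ofFinite _
    rw [Nat.card_eq_fintype_card, card_eq_pow_finrank (K := K), Module.finrank_linearMap, T'.2]
  rw [Finset.sum_congr rfl fun T' _ => hcard T', Finset.sum_const, smul_eq_mul,
    Finset.card_univ, Nat.card_eq_fintype_card]
end

section
variable {K V : Type*} [Field K] [Fintype K] [AddCommGroup V] [Module K V]
  [FiniteDimensional K V]

theorem finrank_map_mkQ_add (N W' : Submodule K V) (h : N ≤ W') :
    finrank K (W'.map N.mkQ) + finrank K N = finrank K W' := by
  have key := LinearMap.finrank_range_add_finrank_ker (N.mkQ.comp W'.subtype)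
  rw [LinearMap.range_comp, Submodule.range_subtype, LinearMap.ker_comp, Submodule.ker_mkQ] at key
  rw [← key, (Submodule.comapSubtypeEquivOfLe h).finrank_eq]
end

section
variable {V : Type*} [AddCommGroup V] [Module (ZMod 2) V] [FiniteDimensional (ZMod 2) V]

theorem card_inter_eq (W : Submodule (ZMod 2) V) (k m : ℕ) (hW : finrank (ZMod 2) W = k)
    (hmk : m ≤ k) :
    Nat.card {W' : Submodule (ZMod 2) V // finrank (ZMod 2) W' = k ∧
        finrank (ZMod 2) ↥(W ⊓ W') = m} =
      2 ^ ((k - m) ^ 2) * gbinomN (finrank (ZMod 2) V - k) (k - m) * gbinomN k m := by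
  classical
  have : Finite V := Module.finite_of_finite (ZMod 2)
  have : Finite (Submodule (ZMod 2) V) := Finite.of_injective _ SetLike.coe_injective
  set n := finrank (ZMod 2) V with hn
  have hkn : k ≤ n := hW ▸ Submodule.finrank_le W
  -- map to the intersection subspace
  set g : {W' : Submodule (ZMod 2) V // finrank (ZMod 2) W' = k ∧
      finrank (ZMod 2) ↥(W ⊓ W') = m} →
      {M : Submodule (ZMod 2) V // finrank (ZMod 2) M = m ∧ M ≤ W} :=
    fun W' => ⟨W ⊓ W'.1, W'.2.2, inf_le_left⟩ with hgdef
  -- fibers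
  have fibCard : ∀ M : {M : Submodule (ZMod 2) V // finrank (ZMod 2) M = m ∧ M ≤ W},
      Nat.card {W' // g W' = M} =
        gbinomN (n - k) (k - m) * 2 ^ ((k - m) * (k - m)) := by
    rintro ⟨M, hM, hMW⟩
    set U : Submodule (ZMod 2) (V ⧸ M) := W.map M.mkQ with hU
    have hUrank : finrank (ZMod 2) U + m = k := by
      rw [← hM, finrank_map_mkQ_add M W hMW, hW]
    -- fiber ≃ {T // finrank T = k - m ∧ T ⊓ U = ⊥}
    have fe : {W' // g W' = (⟨M, hM, hMW⟩ : {M : Submodule (ZMod 2) V //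
          finrank (ZMod 2) M = m ∧ M ≤ W})} ≃
        {T : Submodule (ZMod 2) (V ⧸ M) // finrank (ZMod 2) T = k - m ∧ T ⊓ U = ⊥} := by
      refine ⟨fun W' => ⟨W'.1.1.map M.mkQ, ?_, ?_⟩, fun T => ⟨⟨T.1.comap M.mkQ, ?_, ?_⟩, ?_⟩, ?_, ?_⟩
      · -- finrank of image
        obtain ⟨⟨W', hW'1, hW'2⟩, hfib⟩ := W'
        have hMeq : W ⊓ W' = M := congrArg Subtype.val hfib
        have hMle : M ≤ W' := hMeq ▸ inf_le_right
        have := finrank_map_mkQ_add M W' hMle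
        rw [hW'1, hM] at this
        show finrank (ZMod 2) ↥(W'.map M.mkQ) = k - m
        omega
      · -- trivial intersection with U
        obtain ⟨⟨W', hW'1, hW'2⟩, hfib⟩ := W'
        have hMeq : W ⊓ W' = M := congrArg Subtype.val hfib
        rw [eq_bot_iff]
        rintro x ⟨⟨w', hw', rfl⟩, ⟨w, hw, hww⟩⟩
        have : w' - w ∈ M := by
          rw [← Submodule.Quotient.mk_eq_zero, ← Submodule.mkQ_apply, map_sub]
          rw [Submodule.mkQ_apply, Submodule.mkQ_apply]
          rw [show (Submodule.Quotient.mk w' : V ⧸ M) = M.mkQ w' from rfl, ← hww]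
          simp [Submodule.mkQ_apply]
        have hw'W : w' ∈ W := by
          have hMW' : w' - w ∈ W := hMW this
          simpa using add_mem hMW' hw
        have : w' ∈ M := hMeq ▸ (⟨hw'W, hw'⟩ : w' ∈ W ⊓ W')
        simp [Submodule.mkQ_apply, Submodule.Quotient.mk_eq_zero, this]
      · -- finrank of comap
        have hle : M ≤ T.1.comap M.mkQ := Submodule.le_comap_mkQ M _
        have := finrank_map_mkQ_add M (T.1.comap M.mkQ) hle
        rw [Submodule.map_comap_eq_of_surjective (Submodule.mkQ_surjective M), T.2.1, hM] at this
        omega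
      · -- finrank of W ⊓ comap
        have hinter : W ⊓ T.1.comap M.mkQ = M := by
          apply le_antisymm
          · rintro x ⟨hxW, hxT⟩
            have hx : M.mkQ x ∈ T.1 ⊓ U := ⟨hxT, ⟨x, hxW, rfl⟩⟩
            rw [T.2.2] at hx
            rwa [Submodule.mem_bot, Submodule.mkQ_apply, Submodule.Quotient.mk_eq_zero] at hx
          · exact le_inf hMW (Submodule.le_comap_mkQ M _)
        rw [hinter, hM]
      · -- g of comap is M
        apply Subtype.ext
        show W ⊓ T.1.comap M.mkQ = M
        apply le_antisymm
        · rintro x ⟨hxW, hxT⟩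
          have hx : M.mkQ x ∈ T.1 ⊓ U := ⟨hxT, ⟨x, hxW, rfl⟩⟩
          rw [T.2.2] at hx
          rwa [Submodule.mem_bot, Submodule.mkQ_apply, Submodule.Quotient.mk_eq_zero] at hx
        · exact le_inf hMW (Submodule.le_comap_mkQ M _)
      · -- left inverse
        rintro ⟨⟨W', hW'1, hW'2⟩, hfib⟩
        have hMeq : W ⊓ W' = M := congrArg Subtype.val hfib
        have hMle : M ≤ W' := hMeq ▸ inf_le_right
        apply Subtype.ext; apply Subtype.ext
        show (W'.map M.mkQ).comap M.mkQ = W'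
        rw [Submodule.comap_map_mkQ, sup_eq_right.mpr hMle]
      · -- right inverse
        rintro ⟨T, hT1, hT2⟩
        apply Subtype.ext
        show (T.comap M.mkQ).map M.mkQ = T
        exact Submodule.map_comap_eq_of_surjective (Submodule.mkQ_surjective M) T
    rw [Nat.card_congr fe, card_trivial_inter U (k - m), ZMod.card 2]
    have h1 : finrank (ZMod 2) ((V ⧸ M) ⧸ U) = n - k := by
      have e1 := Submodule.finrank_quotient_add_finrank M
      have e2 := Submodule.finrank_quotient_add_finrank U
      rw [hM, ← hn] at e1
      omega
    have h2 : finrank (ZMod 2) U = k - m := by omega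
    rw [card_grassmannian_zmod, h1, h2]
  -- outer count
  have cardM : Nat.card {M : Submodule (ZMod 2) V // finrank (ZMod 2) M = m ∧ M ≤ W} =
      gbinomN k m := by
    have e : {M : Submodule (ZMod 2) V // finrank (ZMod 2) M = m ∧ M ≤ W} ≃
        {M' : Submodule (ZMod 2) ↥W // finrank (ZMod 2) M' = m} := by
      refine ⟨fun M => ⟨M.1.comap W.subtype, ?_⟩, fun M' => ⟨M'.1.map W.subtype, ?_, ?_⟩, ?_, ?_⟩
      · rw [(Submodule.comapSubtypeEquivOfLe M.2.2).finrank_eq, M.2.1]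
      · rw [← (Submodule.equivMapOfInjective W.subtype W.injective_subtype M'.1).finrank_eq, M'.2]
      · rintro x ⟨y, hy, rfl⟩; exact y.2
      · rintro ⟨M, hM1, hM2⟩
        apply Subtype.ext
        show (M.comap W.subtype).map W.subtype = M
        rw [Submodule.map_comap_subtype, inf_eq_right.mpr hM2]
      · rintro ⟨M', hM'⟩
        apply Subtype.ext
        show (M'.map W.subtype).comap W.subtype = M'
        rw [Submodule.comap_map_eq, Submodule.ker_subtype, sup_bot_eq]
    rw [Nat.card_congr e, card_grassmannian_zmod, hW]
  -- assemble
  haveI : Fintype {M : Submodule (ZMod 2) V // finrank (ZMod 2) M = m ∧ M ≤ W} :=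
    Fintype.ofFinite _
  haveI : ∀ M : {M : Submodule (ZMod 2) V // finrank (ZMod 2) M = m ∧ M ≤ W},
      Fintype {W' // g W' = M} := fun M => Fintype.ofFinite _
  rw [Nat.card_congr (Equiv.sigmaFiberEquiv g).symm]
  rw [Nat.card_eq_fintype_card, Fintype.card_sigma]
  have : ∀ M : {M : Submodule (ZMod 2) V // finrank (ZMod 2) M = m ∧ M ≤ W},
      Fintype.card {W' // g W' = M} = gbinomN (n - k) (k - m) * 2 ^ ((k - m) * (k - m)) := by
    intro M
    rw [← Nat.card_eq_fintype_card, fibCard M]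
  rw [Finset.sum_congr rfl fun M _ => this M, Finset.sum_const, smul_eq_mul, Finset.card_univ,
    ← Nat.card_eq_fintype_card, cardM, pow_two]
  ring
end


/-- The Grassmannian `Gr₂(n,k)`: the set of `k`-dimensional subspaces of `𝔽₂ⁿ`. -/
abbrev Grassmannian (n k : ℕ) :=
  {W : Submodule (ZMod 2) (Fin n → ZMod 2) // Module.finrank (ZMod 2) W = k}

/-- For `0 ≤ m ≤ k ≤ n` there is a collection of
`2^{(k-m)²}·[n-k choose k-m]₂·[k choose m]₂` mutually orthogonal permutations of `Gr₂(n,k)`,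
each with the `m`-intersection property. -/
theorem exists_mutually_orthogonal_permutations_with_intersection_property
    {n k m : ℕ} (hmk : m ≤ k) (hkn : k ≤ n) :
    ∃ π : Fin (2 ^ ((k - m) ^ 2) * gbinomN (n - k) (k - m) * gbinomN k m) →
        Equiv.Perm (Grassmannian n k),
      (∀ i j, i ≠ j → ∀ W, π i W ≠ π j W) ∧
      (∀ i, ∀ W : Grassmannian n k,
        Module.finrank (ZMod 2) ↥((W : Submodule (ZMod 2) (Fin n → ZMod 2)) ⊓
          ((π i W : Grassmannian n k) : Submodule (ZMod 2) (Fin n → ZMod 2))) = m) := by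
  classical
  set N := 2 ^ ((k - m) ^ 2) * gbinomN (n - k) (k - m) * gbinomN k m with hN
  have : Finite (Fin n → ZMod 2) := inferInstance
  have : Finite (Submodule (ZMod 2) (Fin n → ZMod 2)) :=
    Finite.of_injective _ SetLike.coe_injective
  haveI : Fintype (Grassmannian n k) := Fintype.ofFinite _
  have hV : Module.finrank (ZMod 2) (Fin n → ZMod 2) = n := by
    simp [Module.finrank_fintype_fun_eq_card]
  set R : Grassmannian n k → Grassmannian n k → Prop :=
    fun A B => Module.finrank (ZMod 2) ↥(A.1 ⊓ B.1) = m with hR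
  have hdeg : ∀ A : Grassmannian n k,
      (Finset.univ.filter (fun B => R A B)).card = N := by
    intro A
    rw [← Fintype.card_subtype]
    have e : {B : Grassmannian n k // R A B} ≃
        {W' : Submodule (ZMod 2) (Fin n → ZMod 2) //
          Module.finrank (ZMod 2) W' = k ∧ Module.finrank (ZMod 2) ↥(A.1 ⊓ W') = m} :=
      ⟨fun B => ⟨B.1.1, B.1.2, B.2⟩, fun W' => ⟨⟨W'.1, W'.2.1⟩, W'.2.2⟩,
        fun B => rfl, fun W' => rfl⟩
    rw [← Nat.card_eq_fintype_card, Nat.card_congr e, card_inter_eq A.1 k m A.2 hmk, hV, hN]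
  have hout : ∀ A : Grassmannian n k,
      (Finset.univ.filter (fun B => R A B)).card = N := hdeg
  have hin : ∀ B : Grassmannian n k,
      (Finset.univ.filter (fun A => R A B)).card = N := by
    intro B
    have : Finset.univ.filter (fun A => R A B) = Finset.univ.filter (fun A => R B A) := by
      apply Finset.filter_congr
      intro A _
      show R A B ↔ R B A
      simp only [hR]
      rw [inf_comm]
    rw [this, hdeg B]
  obtain ⟨π, hπ1, hπ2⟩ := exists_perms_of_regular N R hout hin
  exact ⟨π, hπ1, fun i W => hπ2 i W⟩
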